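/- Let Λ₁,…,Λ_N be finite nonempty sets with Sₙ ≥ 1 settings per site. A family of probability distributions P_{(s₁,…,s_N)} on Λ₁ × ⋯ × Λ_N admits a deterministic LqHV model if and only if it satisfies the general nonsignaling (consistency) condition: for every nonempty subset {n₁<…<n_M} of {1,…,N} and any two setting tuples s, s′ with s_{nⱼ} = s′_{nⱼ} for all j, the marginals of P_s and P_{s′} onto coordinates n₁,…,n_M coincide. -/

import Mathlib

open Finset

private lemma aux_sum_pi_prod {ι : Type*} [Fintype ι] [DecidableEq ι] {κ : ι → Type*}
    [∀ i, Fintype (κ i)] (h : ∀ i, κ i → ℝ) :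
    ∑ f : ∀ i, κ i, ∏ i, h i (f i) = ∏ i, ∑ j, h i j :=
  (Fintype.prod_sum h).symm

private lemma aux_sum_finset_prod {ι : Type*} [Fintype ι] [DecidableEq ι] (a b : ι → ℝ) :
    ∑ A : Finset ι, ∏ i, (if i ∈ A then a i else b i) = ∏ i, (a i + b i) := by
  rw [Fintype.prod_add]
  refine Finset.sum_congr rfl fun A _ => ?_
  rw [Finset.prod_ite]
  congr 1
  · apply Finset.prod_congr _ fun _ _ => rfl
    simp [Finset.filter_mem_eq_inter]
  · apply Finset.prod_congr _ fun _ _ => rfl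
    ext i; simp

private lemma aux_prod_two_point {κ : Type*} [Fintype κ] [DecidableEq κ] (h : κ → ℝ) (a b : κ)
    (hout : ∀ u, u ≠ a → u ≠ b → h u = 1) :
    ∏ u, h u = if a = b then h a else h a * h b := by
  classical
  split_ifs with hab
  · subst hab
    rw [← Finset.prod_subset (Finset.subset_univ ({a} : Finset κ))
      (fun u _ hu => hout u (by simpa using hu) (by simpa using hu))]
    simp
  · rw [← Finset.prod_subset (Finset.subset_univ ({a, b} : Finset κ))
      (fun u _ hu => by
        simp only [Finset.mem_insert, Finset.mem_singleton, not_or] at hu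
        exact hout u hu.1 hu.2)]
    rw [Finset.prod_insert (by simp [hab]), Finset.prod_singleton]

private lemma aux_sum_ite_point {m : ℕ} (v : Fin m) (a b : ℝ) :
    ∑ u : Fin m, (if u = v then a else b) = a + ((m : ℝ) - 1) * b := by
  have h : ∀ u : Fin m, (if u = v then a else b) = (if u = v then a - b else 0) + b := by
    intro u; split <;> ring
  simp only [h, Finset.sum_add_distrib, Finset.sum_ite_eq', Finset.mem_univ, if_true,
    Finset.sum_const, Finset.card_univ, Fintype.card_fin, nsmul_eq_mul]
  ring

/-- Per-site evaluation of the constrained sum over local deterministic functions. -/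
private lemma aux_site {m : ℕ} {Λ : Type*} [Fintype Λ] [DecidableEq Λ] [Nonempty Λ]
    (hA : Prop) [Decidable hA] (wf : ℝ) (sv tv : Fin m) (xv yv : Λ) :
    ∑ g : Fin m → Λ,
      (if g sv = xv then (1:ℝ) else 0) *
        ((if hA then (if yv = g tv then (1:ℝ) else 0) else wf) *
          ∏ u : Fin m, (if hA ∧ u = tv then (1:ℝ) else ((Fintype.card Λ : ℝ))⁻¹))
      = if hA then (if tv = sv then (if yv = xv then (1:ℝ) else 0) else ((Fintype.card Λ : ℝ))⁻¹)
        else wf * ((Fintype.card Λ : ℝ))⁻¹ := by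
  classical
  have hc : ((Fintype.card Λ : ℝ)) ≠ 0 := Nat.cast_ne_zero.mpr Fintype.card_ne_zero
  by_cases hA' : hA
  · simp only [eq_true hA', if_true, true_and]
    have hpt : ∀ g : Fin m → Λ,
        (if g sv = xv then (1:ℝ) else 0) * (if yv = g tv then (1:ℝ) else 0)
          = ∏ u : Fin m, ((if u = sv then (if g u = xv then (1:ℝ) else 0) else 1) *
              (if u = tv then (if yv = g u then (1:ℝ) else 0) else 1)) := by
      intro g
      rw [aux_prod_two_point _ sv tv (fun u h1 h2 => by simp [h1, h2])]
      by_cases hst : sv = tv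
      · subst hst; simp
      · simp [hst, Ne.symm hst]
    have step : ∀ g : Fin m → Λ,
        (if g sv = xv then (1:ℝ) else 0) *
          ((if yv = g tv then (1:ℝ) else 0) * ∏ u : Fin m, (if u = tv then (1:ℝ) else ((Fintype.card Λ : ℝ))⁻¹))
        = ∏ u : Fin m,
            (((if u = sv then (if g u = xv then (1:ℝ) else 0) else 1) *
              (if u = tv then (if yv = g u then (1:ℝ) else 0) else 1)) *
              (if u = tv then (1:ℝ) else ((Fintype.card Λ : ℝ))⁻¹)) := by
      intro g
      rw [Finset.prod_mul_distrib, ← hpt g]; ring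
    simp only [step]
    rw [aux_sum_pi_prod (fun u l => ((if u = sv then (if l = xv then (1:ℝ) else 0) else 1) *
        (if u = tv then (if yv = l then (1:ℝ) else 0) else 1)) *
        (if u = tv then (1:ℝ) else ((Fintype.card Λ : ℝ))⁻¹))]
    rw [aux_prod_two_point _ sv tv (fun u h1 h2 => by
      simp [h1, h2, Finset.sum_const, nsmul_eq_mul, mul_inv_cancel₀ hc])]
    by_cases hst : sv = tv
    · subst hst
      simp only [if_pos rfl, eq_comm (a := sv)]
      simp [Finset.sum_ite_eq', mul_ite, ite_mul]
    · simp only [if_neg hst, if_neg (Ne.symm hst), if_pos rfl, mul_one, one_mul]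
      simp [ite_mul, one_mul, zero_mul, Finset.sum_ite_eq, Finset.sum_ite_eq']
  · simp only [eq_false hA', if_false, false_and]
    have step2 : ∀ g : Fin m → Λ,
        (if g sv = xv then (1:ℝ) else 0) * (wf * ∏ u : Fin m, ((Fintype.card Λ : ℝ))⁻¹)
        = wf * ∏ u : Fin m, ((if u = sv then (if g u = xv then (1:ℝ) else 0) else 1) *
            ((Fintype.card Λ : ℝ))⁻¹) := by
      intro g
      rw [Finset.prod_mul_distrib, Finset.prod_ite_eq' Finset.univ sv
        (fun u => if g u = xv then (1:ℝ) else 0)]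
      simp
    simp only [step2]
    rw [← Finset.mul_sum, aux_sum_pi_prod (fun u l => ((if u = sv then (if l = xv then (1:ℝ) else 0) else 1) *
        ((Fintype.card Λ : ℝ))⁻¹))]
    rw [aux_prod_two_point _ sv sv (fun u h1 _ => by
      simp [h1, Finset.sum_const, nsmul_eq_mul, mul_inv_cancel₀ hc])]
    simp [Finset.sum_ite_eq', ← Finset.sum_mul]

private lemma aux_sum_rot {α β γ : Type*} [Fintype α] [Fintype β] [Fintype γ] (F : α → β → γ → ℝ) :
    ∑ a : α, ∑ b : β, ∑ c : γ, F a b c = ∑ c : γ, ∑ a : α, ∑ b : β, F a b c :=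
  calc ∑ a : α, ∑ b : β, ∑ c : γ, F a b c
      = ∑ a : α, ∑ c : γ, ∑ b : β, F a b c :=
        Finset.sum_congr rfl fun a _ => Finset.sum_comm
    _ = ∑ c : γ, ∑ a : α, ∑ b : β, F a b c := Finset.sum_comm

/-- The explicit quasi hidden-variable weight. -/
private noncomputable def nu {N : ℕ} {S : Fin N → ℕ} {Λ : Fin N → Type*}
    [∀ n, Fintype (Λ n)] [∀ n, DecidableEq (Λ n)]
    (P : (∀ n, Fin (S n)) → (∀ n, Λ n) → ℝ) (ω : ∀ n, Fin (S n) → Λ n) : ℝ :=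
  ∑ A : Finset (Fin N), ∑ t : ∀ n, Fin (S n), ∑ y : ∀ n, Λ n,
    P t y * ∏ n,
      ((if n ∈ A then (if y n = ω n (t n) then (1:ℝ) else 0) else -(((S n : ℝ) - 1) / (S n))) *
        ∏ u : Fin (S n), (if n ∈ A ∧ u = t n then (1:ℝ) else ((Fintype.card (Λ n) : ℝ))⁻¹))

private lemma key {N : ℕ} {S : Fin N → ℕ} (hS : ∀ n, 1 ≤ S n) {Λ : Fin N → Type*}
    [∀ n, Fintype (Λ n)] [∀ n, DecidableEq (Λ n)] [∀ n, Nonempty (Λ n)]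
    (P : (∀ n, Fin (S n)) → (∀ n, Λ n) → ℝ)
    (hnorm : ∀ s, ∑ x, P s x = 1)
    (hns : ∀ (M : Finset (Fin N)), M.Nonempty →
      ∀ (s s' : ∀ n, Fin (S n)), (∀ n ∈ M, s n = s' n) →
      ∀ y : ∀ n, Λ n,
        (∑ x ∈ Finset.univ.filter (fun x : ∀ n, Λ n => ∀ n ∈ M, x n = y n), P s x)
          = ∑ x ∈ Finset.univ.filter (fun x : ∀ n, Λ n => ∀ n ∈ M, x n = y n), P s' x)
    (s : ∀ n, Fin (S n)) (x : ∀ n, Λ n) :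
    ∑ ω ∈ Finset.univ.filter (fun ω : ∀ n, Fin (S n) → Λ n => ∀ n, ω n (s n) = x n),
      nu P ω = P s x := by
  classical
  have hc : ∀ n, ((Fintype.card (Λ n) : ℝ)) ≠ 0 :=
    fun n => Nat.cast_ne_zero.mpr Fintype.card_ne_zero
  have hSr : ∀ n, ((S n : ℝ)) ≠ 0 :=
    fun n => Nat.cast_ne_zero.mpr (Nat.one_le_iff_ne_zero.mp (hS n))
  -- Step 1
  have step1 : ∑ ω ∈ Finset.univ.filter (fun ω : ∀ n, Fin (S n) → Λ n => ∀ n, ω n (s n) = x n),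
      nu P ω
      = ∑ A : Finset (Fin N), ∑ t : ∀ n, Fin (S n), ∑ y : ∀ n, Λ n,
          P t y * ∏ n,
            (if n ∈ A then (if t n = s n then (if y n = x n then (1:ℝ) else 0)
                else ((Fintype.card (Λ n) : ℝ))⁻¹)
              else -(((S n : ℝ) - 1) / (S n)) * ((Fintype.card (Λ n) : ℝ))⁻¹) := by
    rw [Finset.sum_filter]
    have h1 : ∀ ω : (∀ n, Fin (S n) → Λ n),
        (if (∀ n, ω n (s n) = x n) then nu P ω else 0)
          = ∑ A : Finset (Fin N), ∑ t : ∀ n, Fin (S n), ∑ y : ∀ n, Λ n,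
              P t y * ∏ n,
                ((if (ω n) (s n) = x n then (1:ℝ) else 0) *
                  ((if n ∈ A then (if y n = (ω n) (t n) then (1:ℝ) else 0)
                      else -(((S n : ℝ) - 1) / (S n))) *
                    ∏ u : Fin (S n), (if n ∈ A ∧ u = t n then (1:ℝ)
                      else ((Fintype.card (Λ n) : ℝ))⁻¹))) := by
      intro ω
      by_cases hcond : ∀ n, ω n (s n) = x n
      · rw [if_pos hcond]
        unfold nu
        refine Finset.sum_congr rfl fun A _ => Finset.sum_congr rfl fun t _ =>
          Finset.sum_congr rfl fun y _ => ?_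
        congr 1
        refine Finset.prod_congr rfl fun n _ => ?_
        rw [if_pos (hcond n), one_mul]
      · rw [if_neg hcond]
        push_neg at hcond; obtain ⟨n0, hn0⟩ := hcond
        symm
        refine Finset.sum_eq_zero fun A _ => Finset.sum_eq_zero fun t _ =>
          Finset.sum_eq_zero fun y _ => ?_
        rw [Finset.prod_eq_zero (Finset.mem_univ n0) (by rw [if_neg hn0, zero_mul]), mul_zero]
    simp only [h1]
    rw [Finset.sum_comm]
    refine Finset.sum_congr rfl fun A _ => ?_
    rw [Finset.sum_comm]
    refine Finset.sum_congr rfl fun t _ => ?_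
    rw [Finset.sum_comm]
    refine Finset.sum_congr rfl fun y _ => ?_
    rw [← Finset.mul_sum]
    congr 1
    rw [aux_sum_pi_prod (fun n (g : Fin (S n) → Λ n) =>
      (if g (s n) = x n then (1:ℝ) else 0) *
        ((if n ∈ A then (if y n = g (t n) then (1:ℝ) else 0)
            else -(((S n : ℝ) - 1) / (S n))) *
          ∏ u : Fin (S n), (if n ∈ A ∧ u = t n then (1:ℝ)
            else ((Fintype.card (Λ n) : ℝ))⁻¹)))]
    exact Finset.prod_congr rfl fun n _ =>
      aux_site (n ∈ A) (-(((S n : ℝ) - 1) / (S n))) (s n) (t n) (x n) (y n)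
  rw [step1]
  -- Step 2 : nonsignaling replaces P t by P s
  have step2 : ∀ (A : Finset (Fin N)) (t : ∀ n, Fin (S n)),
      (∑ y : ∀ n, Λ n, P t y * ∏ n,
        (if n ∈ A then (if t n = s n then (if y n = x n then (1:ℝ) else 0)
            else ((Fintype.card (Λ n) : ℝ))⁻¹)
          else -(((S n : ℝ) - 1) / (S n)) * ((Fintype.card (Λ n) : ℝ))⁻¹))
      = ∑ y : ∀ n, Λ n, P s y * ∏ n,
        (if n ∈ A then (if t n = s n then (if y n = x n then (1:ℝ) else 0)
            else ((Fintype.card (Λ n) : ℝ))⁻¹)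
          else -(((S n : ℝ) - 1) / (S n)) * ((Fintype.card (Λ n) : ℝ))⁻¹) := by
    intro A t
    set B : Finset (Fin N) := Finset.univ.filter (fun n => n ∈ A ∧ t n = s n) with hB
    have hmemB : ∀ n, n ∈ B ↔ (n ∈ A ∧ t n = s n) := by
      intro n; simp [hB]
    have hfact : ∀ (G : (∀ n, Λ n) → ℝ),
        (∑ y : ∀ n, Λ n, G y * ∏ n,
          (if n ∈ A then (if t n = s n then (if y n = x n then (1:ℝ) else 0)
              else ((Fintype.card (Λ n) : ℝ))⁻¹)
            else -(((S n : ℝ) - 1) / (S n)) * ((Fintype.card (Λ n) : ℝ))⁻¹))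
        = (∑ y ∈ Finset.univ.filter (fun y : ∀ n, Λ n => ∀ n ∈ B, y n = x n), G y) *
            ∏ n, (if n ∈ A then (if t n = s n then (1:ℝ) else ((Fintype.card (Λ n) : ℝ))⁻¹)
              else -(((S n : ℝ) - 1) / (S n)) * ((Fintype.card (Λ n) : ℝ))⁻¹) := by
      intro G
      rw [Finset.sum_filter, Finset.sum_mul]
      refine Finset.sum_congr rfl fun y _ => ?_
      have hprod : (∏ n, (if n ∈ A then (if t n = s n then (if y n = x n then (1:ℝ) else 0)
              else ((Fintype.card (Λ n) : ℝ))⁻¹)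
            else -(((S n : ℝ) - 1) / (S n)) * ((Fintype.card (Λ n) : ℝ))⁻¹))
          = (if (∀ n ∈ B, y n = x n) then (1:ℝ) else 0) *
            ∏ n, (if n ∈ A then (if t n = s n then (1:ℝ) else ((Fintype.card (Λ n) : ℝ))⁻¹)
              else -(((S n : ℝ) - 1) / (S n)) * ((Fintype.card (Λ n) : ℝ))⁻¹) := by
        have h2 : (∏ n, (if n ∈ B then (if y n = x n then (1:ℝ) else 0) else 1))
            = (if (∀ n ∈ B, y n = x n) then (1:ℝ) else 0) := by
          rw [Finset.prod_ite_mem Finset.univ B (fun n => if y n = x n then (1:ℝ) else 0),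
            Finset.univ_inter, Finset.prod_boole]
          by_cases h3 : ∀ n ∈ B, y n = x n <;> simp [h3]
        rw [← h2, ← Finset.prod_mul_distrib]
        refine Finset.prod_congr rfl fun n _ => ?_
        by_cases hn : n ∈ A
        · by_cases hts : t n = s n
          · simp [hmemB, hn, hts]
          · simp [hmemB, hn, hts]
        · simp [hmemB, hn]
      rw [hprod]
      by_cases hcy : ∀ n ∈ B, y n = x n <;> simp [hcy]
    rw [hfact (P t), hfact (P s)]
    congr 1
    rcases Finset.eq_empty_or_nonempty B with hBe | hBne
    · have : ∀ G : (∀ n, Λ n) → ℝ,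
          (∑ y ∈ Finset.univ.filter (fun y : ∀ n, Λ n => ∀ n ∈ B, y n = x n), G y)
            = ∑ y : ∀ n, Λ n, G y := by
        intro G
        rw [Finset.filter_true_of_mem]
        intro y _ n hn
        rw [hBe] at hn
        exact absurd hn (Finset.notMem_empty n)
      rw [this (P t), this (P s), hnorm t, hnorm s]
    · exact hns B hBne t s (fun n hn => ((hmemB n).mp hn).2) x
  -- Step 3 : pure algebra
  calc ∑ A : Finset (Fin N), ∑ t : ∀ n, Fin (S n), ∑ y : ∀ n, Λ n,
        P t y * ∏ n,
          (if n ∈ A then (if t n = s n then (if y n = x n then (1:ℝ) else 0)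
              else ((Fintype.card (Λ n) : ℝ))⁻¹)
            else -(((S n : ℝ) - 1) / (S n)) * ((Fintype.card (Λ n) : ℝ))⁻¹)
      = ∑ A : Finset (Fin N), ∑ t : ∀ n, Fin (S n), ∑ y : ∀ n, Λ n,
        P s y * ∏ n,
          (if n ∈ A then (if t n = s n then (if y n = x n then (1:ℝ) else 0)
              else ((Fintype.card (Λ n) : ℝ))⁻¹)
            else -(((S n : ℝ) - 1) / (S n)) * ((Fintype.card (Λ n) : ℝ))⁻¹) := by
        exact Finset.sum_congr rfl fun A _ => Finset.sum_congr rfl fun t _ => step2 A t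
    _ = ∑ y : ∀ n, Λ n, P s y *
          ∑ A : Finset (Fin N), ∑ t : ∀ n, Fin (S n), ∏ n,
            (if n ∈ A then (if t n = s n then (if y n = x n then (1:ℝ) else 0)
                else ((Fintype.card (Λ n) : ℝ))⁻¹)
              else -(((S n : ℝ) - 1) / (S n)) * ((Fintype.card (Λ n) : ℝ))⁻¹) := by
        rw [aux_sum_rot (fun (A : Finset (Fin N)) (t : ∀ n, Fin (S n)) (y : ∀ n, Λ n) =>
          P s y * ∏ n,
            (if n ∈ A then (if t n = s n then (if y n = x n then (1:ℝ) else 0)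
                else ((Fintype.card (Λ n) : ℝ))⁻¹)
              else -(((S n : ℝ) - 1) / (S n)) * ((Fintype.card (Λ n) : ℝ))⁻¹))]
        refine Finset.sum_congr rfl fun y _ => ?_
        simp only [Finset.mul_sum]
    _ = ∑ y : ∀ n, Λ n, P s y * (if y = x then (1:ℝ) else 0) := by
        refine Finset.sum_congr rfl fun y _ => ?_
        congr 1
        have hinner : ∀ A : Finset (Fin N),
            (∑ t : ∀ n, Fin (S n), ∏ n,
              (if n ∈ A then (if t n = s n then (if y n = x n then (1:ℝ) else 0)
                  else ((Fintype.card (Λ n) : ℝ))⁻¹)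
                else -(((S n : ℝ) - 1) / (S n)) * ((Fintype.card (Λ n) : ℝ))⁻¹))
            = ∏ n, (if n ∈ A then
                ((if y n = x n then (1:ℝ) else 0) + ((S n : ℝ) - 1) * ((Fintype.card (Λ n) : ℝ))⁻¹)
              else -(((S n : ℝ) - 1)) * ((Fintype.card (Λ n) : ℝ))⁻¹) := by
          intro A
          rw [aux_sum_pi_prod (fun n (u : Fin (S n)) =>
            (if n ∈ A then (if u = s n then (if y n = x n then (1:ℝ) else 0)
                else ((Fintype.card (Λ n) : ℝ))⁻¹)
              else -(((S n : ℝ) - 1) / (S n)) * ((Fintype.card (Λ n) : ℝ))⁻¹))]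
          refine Finset.prod_congr rfl fun n _ => ?_
          by_cases hn : n ∈ A
          · simp only [if_pos hn]
            exact aux_sum_ite_point (s n) _ _
          · simp only [if_neg hn, Finset.sum_const, Finset.card_univ, Fintype.card_fin,
              nsmul_eq_mul]
            field_simp
            rw [mul_div_cancel_left₀ _ (hSr n)]
        simp only [hinner]
        rw [aux_sum_finset_prod]
        have : ∀ n, ((if y n = x n then (1:ℝ) else 0) + ((S n : ℝ) - 1) * ((Fintype.card (Λ n) : ℝ))⁻¹)
            + -(((S n : ℝ) - 1)) * ((Fintype.card (Λ n) : ℝ))⁻¹ = (if y n = x n then (1:ℝ) else 0) := by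
          intro n; ring
        simp only [this]
        rw [Fintype.prod_boole]
        congr 1
        simp [funext_iff]
    _ = P s x := by simp [mul_ite, Finset.sum_ite_eq']

/-- Theorem 1 of Loubenets, finite version: a multipartite family
of scenario distributions admits a deterministic LqHV model iff it satisfies the
general nonsignaling (consistency) condition. -/
theorem deterministic_lqhv_iff_nonsignaling
    {N : ℕ} {S : Fin N → ℕ} (hS : ∀ n, 1 ≤ S n) {Λ : Fin N → Type*}
    [∀ n, Fintype (Λ n)] [∀ n, DecidableEq (Λ n)] [∀ n, Nonempty (Λ n)]
    (P : (∀ n, Fin (S n)) → (∀ n, Λ n) → ℝ)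
    (hpos : ∀ s x, 0 ≤ P s x) (hnorm : ∀ s, ∑ x, P s x = 1) :
    (∃ (Ω : Type) (_ : Fintype Ω) (_ : DecidableEq Ω) (ν : Ω → ℝ)
        (f : ∀ n, Fin (S n) → Ω → Λ n),
      (∑ ω, ν ω) = 1 ∧
      ∀ (s : ∀ n, Fin (S n)) (x : ∀ n, Λ n),
        P s x = ∑ ω ∈ Finset.univ.filter (fun ω : Ω => ∀ n, f n (s n) ω = x n), ν ω)
    ↔
    (∀ (M : Finset (Fin N)), M.Nonempty →
      ∀ (s s' : ∀ n, Fin (S n)), (∀ n ∈ M, s n = s' n) →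
      ∀ y : ∀ n, Λ n,
        (∑ x ∈ Finset.univ.filter (fun x : ∀ n, Λ n => ∀ n ∈ M, x n = y n), P s x)
          = ∑ x ∈ Finset.univ.filter (fun x : ∀ n, Λ n => ∀ n ∈ M, x n = y n), P s' x) := by
  classical
  constructor
  · rintro ⟨Ω, _, _, ν, f, hsum, hmodel⟩ M hM s s' hss y
    have hrw : ∀ σ : ∀ n, Fin (S n),
        (∑ x ∈ Finset.univ.filter (fun x : ∀ n, Λ n => ∀ n ∈ M, x n = y n), P σ x)
          = ∑ ω : Ω, (if (∀ n ∈ M, f n (σ n) ω = y n) then ν ω else 0) := by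
      intro σ
      rw [Finset.sum_filter]
      have h1 : ∀ x : ∀ n, Λ n,
          (if (∀ n ∈ M, x n = y n) then P σ x else 0)
            = ∑ ω : Ω, (if x = (fun n => f n (σ n) ω) then
                (if (∀ n ∈ M, f n (σ n) ω = y n) then ν ω else 0) else 0) := by
        intro x
        have h2 : (if (∀ n ∈ M, x n = y n) then P σ x else 0)
            = ∑ ω : Ω, (if (∀ n ∈ M, x n = y n) ∧ (∀ n, f n (σ n) ω = x n) then ν ω else 0) := by
          by_cases hx : ∀ n ∈ M, x n = y n
          · rw [if_pos hx, hmodel σ x, Finset.sum_filter]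
            refine Finset.sum_congr rfl fun ω _ => ?_
            by_cases hω : ∀ n, f n (σ n) ω = x n
            · rw [if_pos hω, if_pos ⟨hx, hω⟩]
            · rw [if_neg hω, if_neg (fun h => hω h.2)]
          · rw [if_neg hx]
            exact (Finset.sum_eq_zero fun ω _ => if_neg (fun h => hx h.1)).symm
        rw [h2]
        refine Finset.sum_congr rfl fun ω _ => ?_
        by_cases hx : x = fun n => f n (σ n) ω
        · rw [if_pos hx]
          subst hx
          by_cases hy : ∀ n ∈ M, f n (σ n) ω = y n
          · rw [if_pos hy, if_pos ⟨hy, fun n => rfl⟩]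
          · rw [if_neg hy, if_neg (fun h => hy h.1)]
        · rw [if_neg hx, if_neg (fun h => hx (funext fun n => (h.2 n).symm))]
      simp only [h1]
      rw [Finset.sum_comm]
      refine Finset.sum_congr rfl fun ω _ => ?_
      rw [Finset.sum_ite_eq' Finset.univ (fun n => f n (σ n) ω)
        (fun _ => if (∀ n ∈ M, f n (σ n) ω = y n) then ν ω else 0)]
      simp
    rw [hrw s, hrw s']
    refine Finset.sum_congr rfl fun ω _ => ?_
    by_cases hcond : ∀ n ∈ M, f n (s n) ω = y n
    · rw [if_pos hcond, if_pos (fun n hn => by rw [← hss n hn]; exact hcond n hn)]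
    · rw [if_neg hcond, if_neg (fun hcon => hcond (fun n hn => by rw [hss n hn]; exact hcon n hn))]
  · intro hns
    set EQ : (∀ n, Fin (S n) → Fin (Fintype.card (Λ n))) ≃ (∀ n, Fin (S n) → Λ n) :=
      Equiv.piCongrRight (fun n =>
        Equiv.arrowCongr (Equiv.refl (Fin (S n))) (Fintype.equivFin (Λ n)).symm) with hEQ
    refine ⟨∀ n, Fin (S n) → Fin (Fintype.card (Λ n)), inferInstance, inferInstance,
      fun ω => nu P (EQ ω), fun n t ω => (EQ ω) n t, ?_, ?_⟩
    · have htrans : ∑ ω : ∀ n, Fin (S n) → Fin (Fintype.card (Λ n)), nu P (EQ ω)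
          = ∑ ω' : ∀ n, Fin (S n) → Λ n, nu P ω' :=
        Fintype.sum_equiv EQ _ _ (fun ω => rfl)
      rw [htrans]
      set s₀ : ∀ n, Fin (S n) := fun n => ⟨0, hS n⟩ with hs₀
      have hfib : ∑ ω' : ∀ n, Fin (S n) → Λ n, nu P ω'
          = ∑ x : ∀ n, Λ n, ∑ ω' ∈ Finset.univ.filter
              (fun ω' : ∀ n, Fin (S n) → Λ n => (fun n => ω' n (s₀ n)) = x), nu P ω' :=
        (Finset.sum_fiberwise Finset.univ (fun ω' : ∀ n, Fin (S n) → Λ n => fun n => ω' n (s₀ n))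
          (nu P)).symm
      rw [hfib]
      have : ∀ x : ∀ n, Λ n,
          (∑ ω' ∈ Finset.univ.filter
              (fun ω' : ∀ n, Fin (S n) → Λ n => (fun n => ω' n (s₀ n)) = x), nu P ω') = P s₀ x := by
        intro x
        rw [← key hS P hnorm hns s₀ x]
        congr 1
        apply Finset.filter_congr
        intro ω' _
        simp [funext_iff]
      simp only [this]
      exact hnorm s₀
    · intro s x
      rw [← key hS P hnorm hns s x, Finset.sum_filter, Finset.sum_filter]
      exact (Fintype.sum_equiv EQ _ _ (fun ω => rfl)).symm
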